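/- Let r ≥ 1 be an integer, M > 0 a real number, and k a positive odd integer. Set p := 1 + ⌊r/2⌋. For y ∈ [−2M√r, 2M√r] define T_k(y) := cos(k·arccos(y/(2M√r))), and for x ∈ ℝ^r with 0 < ‖x‖ ≤ 2M√r (Euclidean norm) define f_k(x) := (T_k(‖x‖)/‖x‖)^{2p}. Let ω := r·vol(B^r) denote the surface area of the unit (r−1)-sphere in ℝ^r. Then for every real t with 0 < t ≤ 2M√r, ∫_{t ≤ ‖x‖ ≤ 2M√r} f_k(x) dx ≤ 2·ω·t^{r − 2p}. (Note r − 2p < 0.) -/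

import Mathlib

open MeasureTheory

/-- The surface area `ω = r · vol(Bʳ)` of the unit `(r-1)`-sphere in `ℝ^r`. -/
noncomputable def unitSphereArea (r : ℕ) : ℝ :=
  r * (volume (Metric.ball (0 : EuclideanSpace ℝ (Fin r)) 1)).toReal

/-- The kernel `f_k(x) = (T_k(‖x‖)/‖x‖)^{2p}`, `p = 1 + ⌊r/2⌋`, built from the
Chebyshev polynomial `T_k(y) = cos(k·arccos(y/(2M√r)))` rescaled to
`[-2M√r, 2M√r]`. -/
noncomputable def chebKernel (r k : ℕ) (M : ℝ) (x : EuclideanSpace ℝ (Fin r)) : ℝ :=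
  (Real.cos (k * Real.arccos (‖x‖ / (2 * M * Real.sqrt r))) / ‖x‖) ^ (2 * (1 + r / 2))

/-- **Decay of the Chebyshev kernel away from the origin (Lemma 4.3 (ii) of the
paper).** With `p = 1 + ⌊r/2⌋`, `ω` the surface area of the unit
`(r-1)`-sphere, and `k` a positive odd integer, for every `0 < t ≤ 2M√r`,
`∫_{t ≤ ‖x‖ ≤ 2M√r} f_k ≤ 2 ω t^{r-2p}` (note `r - 2p < 0`, so the exponent is
an integer power). -/
theorem chebyshev_kernel_mass_tail (r : ℕ) (hr : 1 ≤ r) (M : ℝ) (hM : 0 < M)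
    (k : ℕ) (hk : 0 < k) (hodd : Odd k) (t : ℝ) (ht0 : 0 < t)
    (ht : t ≤ 2 * M * Real.sqrt r) :
    (∫ x in {x : EuclideanSpace ℝ (Fin r) |
        t ≤ ‖x‖ ∧ ‖x‖ ≤ 2 * M * Real.sqrt r}, chebKernel r k M x) ≤
      2 * unitSphereArea r * t ^ ((r : ℤ) - 2 * ((1 + r / 2 : ℕ) : ℤ)) := by
  classical
  set R : ℝ := 2 * M * Real.sqrt r with hRdef
  have hR : 0 < R := lt_of_lt_of_le ht0 ht
  set p : ℕ := 1 + r / 2 with hp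
  have h2p : r + 1 ≤ 2 * p := by omega
  set m : ℤ := (r : ℤ) - 2 * (p : ℤ) with hm
  have hm1 : m ≤ -1 := by omega
  set A : Set (EuclideanSpace ℝ (Fin r)) := {x | t ≤ ‖x‖ ∧ ‖x‖ ≤ R} with hA
  have hAclosed : IsClosed A :=
    IsClosed.inter (isClosed_le continuous_const continuous_norm)
      (isClosed_le continuous_norm continuous_const)
  have hAmeas : MeasurableSet A := hAclosed.measurableSet
  have hAcompact : IsCompact A :=
    (isCompact_closedBall (0 : EuclideanSpace ℝ (Fin r)) R).of_isClosed_subset hAclosed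
      (fun x hx => by simpa [mem_closedBall_zero_iff] using hx.2)
  -- the dominating radial function
  set g : ℝ → ℝ := fun y => y ^ (-(2 * (p : ℤ))) with hg
  have hδ : ∀ x ∈ A, (0 : ℝ) < ‖x‖ := fun x hx => lt_of_lt_of_le ht0 hx.1
  -- pointwise bound
  have hpt : ∀ x ∈ A, chebKernel r k M x ≤ g ‖x‖ := by
    intro x hx
    have hn : (0 : ℝ) < ‖x‖ := hδ x hx
    unfold chebKernel
    rw [← hRdef, ← hp]
    have h1 : |Real.cos (k * Real.arccos (‖x‖ / R)) / ‖x‖| ≤ 1 / ‖x‖ := by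
      rw [abs_div, abs_of_pos hn]
      exact div_le_div₀ zero_le_one (Real.abs_cos_le_one _) hn le_rfl
    calc (Real.cos (k * Real.arccos (‖x‖ / R)) / ‖x‖) ^ (2 * p)
        = |Real.cos (k * Real.arccos (‖x‖ / R)) / ‖x‖| ^ (2 * p) :=
          ((even_two_mul p).pow_abs _).symm
      _ ≤ (1 / ‖x‖) ^ (2 * p) := pow_le_pow_left₀ (abs_nonneg _) h1 _
      _ = g ‖x‖ := by
          rw [hg, one_div, inv_pow, ← zpow_natCast, ← zpow_neg]
          push_cast
          ring_nf
  -- integrability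
  have hcont1 : ContinuousOn (chebKernel r k M) A := by
    apply ContinuousOn.pow
    apply ContinuousOn.div
    · exact (Real.continuous_cos.comp ((continuous_const (y := (k:ℝ))).mul
        (Real.continuous_arccos.comp (continuous_norm.div_const _)))).continuousOn
    · exact continuous_norm.continuousOn
    · exact fun x hx => (hδ x hx).ne'
  have hcont2 : ContinuousOn (fun x : EuclideanSpace ℝ (Fin r) => g ‖x‖) A := by
    apply ContinuousOn.zpow₀ continuous_norm.continuousOn
    exact fun x hx => Or.inl (hδ x hx).ne'
  have hint1 : IntegrableOn (chebKernel r k M) A := hcont1.integrableOn_compact hAcompact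
  have hint2 : IntegrableOn (fun x : EuclideanSpace ℝ (Fin r) => g ‖x‖) A :=
    hcont2.integrableOn_compact hAcompact
  have step1 : (∫ x in A, chebKernel r k M x) ≤ ∫ x in A, g ‖x‖ :=
    setIntegral_mono_on hint1 hint2 hAmeas hpt
  -- rewrite as a full-space integral of a radial function
  haveI : Nonempty (Fin r) := ⟨⟨0, hr⟩⟩
  haveI : Nontrivial (EuclideanSpace ℝ (Fin r)) := by
    exact Module.nontrivial_of_finrank_pos (R := ℝ)
      (by rw [finrank_euclideanSpace_fin]; exact hr)
  set G : ℝ → ℝ := fun y => (Set.Icc t R).indicator g y with hG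
  have step2 : (∫ x in A, g ‖x‖) = ∫ x : EuclideanSpace ℝ (Fin r), G ‖x‖ := by
    rw [← integral_indicator hAmeas]
    refine congrArg _ (funext fun x => ?_)
    by_cases hx : x ∈ A
    · rw [Set.indicator_of_mem hx]
      exact (Set.indicator_of_mem (Set.mem_Icc.2 ⟨hx.1, hx.2⟩) g).symm
    · rw [Set.indicator_of_notMem hx]
      exact (Set.indicator_of_notMem (by simpa [hA, Set.mem_Icc] using hx) g).symm
  have hfr : Module.finrank ℝ (EuclideanSpace ℝ (Fin r)) = r := finrank_euclideanSpace_fin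
  have step3 : (∫ x : EuclideanSpace ℝ (Fin r), G ‖x‖) =
      r * (volume (Metric.ball (0 : EuclideanSpace ℝ (Fin r)) 1)).toReal *
        ∫ y in Set.Ioi (0:ℝ), y ^ (r - 1) * G y := by
    rw [integral_fun_norm_addHaar volume G, hfr]
    simp [nsmul_eq_mul, smul_eq_mul, mul_assoc]
    exact Or.inl (Or.inl rfl)
  -- evaluate the radial integral
  have hIcc : Set.Icc t R ⊆ Set.Ioi (0:ℝ) := fun y hy => lt_of_lt_of_le ht0 hy.1
  have step4 : (∫ y in Set.Ioi (0:ℝ), y ^ (r - 1) * G y) =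
      ∫ y in Set.Icc t R, y ^ (r - 1) * g y := by
    rw [show (fun y => y ^ (r-1) * G y) = fun y => (Set.Icc t R).indicator
        (fun y => y ^ (r-1) * g y) y from funext fun y => by
        rw [hG, Set.indicator_mul_right]]
    rw [setIntegral_indicator measurableSet_Icc,
      Set.inter_eq_self_of_subset_right hIcc]
  have step5 : (∫ y in Set.Icc t R, y ^ (r - 1) * g y) = (R ^ m - t ^ m) / m := by
    rw [MeasureTheory.integral_Icc_eq_integral_Ioc,
      ← intervalIntegral.integral_of_le ht]
    have : ∀ y ∈ Set.uIcc t R, y ^ (r-1) * g y = y ^ ((r:ℤ) - 1 - 2*(p:ℤ)) := by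
      intro y hy
      rw [Set.uIcc_of_le ht] at hy
      have hy0 : (0:ℝ) < y := lt_of_lt_of_le ht0 hy.1
      rw [hg, ← zpow_natCast y (r-1), ← zpow_add₀ hy0.ne']
      congr 1
      push_cast [Nat.cast_sub hr]
      ring
    rw [intervalIntegral.integral_congr this,
      integral_zpow (Or.inr ⟨by omega, fun h => absurd ((Set.uIcc_of_le ht) ▸ h)
        (by simp [Set.mem_Icc]; intro h'; exact absurd h' (not_le.2 ht0))⟩)]
    norm_num
    congr 2 <;> push_cast [hm] <;> ring
  -- final estimate
  have hV : (0:ℝ) ≤ (volume (Metric.ball (0 : EuclideanSpace ℝ (Fin r)) 1)).toReal :=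
    ENNReal.toReal_nonneg
  have htm : (0:ℝ) < t ^ m := zpow_pos ht0 m
  have hRm : (0:ℝ) < R ^ m := zpow_pos hR m
  have hfrac : (R ^ m - t ^ m) / (m:ℝ) ≤ t ^ m := by
    rw [div_le_iff_of_neg (by exact_mod_cast lt_of_le_of_lt hm1 (by norm_num))]
    nlinarith [htm, hRm, (by exact_mod_cast hm1 : (m:ℝ) ≤ -1)]
  calc (∫ x in A, chebKernel r k M x)
      ≤ ∫ x in A, g ‖x‖ := step1
    _ = r * (volume (Metric.ball (0 : EuclideanSpace ℝ (Fin r)) 1)).toReal *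
          ((R ^ m - t ^ m) / m) := by rw [step2, step3, step4, step5]
    _ ≤ 2 * unitSphereArea r * t ^ m := by
        unfold unitSphereArea
        nlinarith [hfrac, hV, htm, hRm,
          mul_le_mul_of_nonneg_left hfrac (by positivity :
            (0:ℝ) ≤ (r:ℝ) * (volume (Metric.ball (0 : EuclideanSpace ℝ (Fin r)) 1)).toReal),
          mul_nonneg (mul_nonneg (by positivity : (0:ℝ) ≤ (r:ℝ)) hV) htm.le]
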